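/- Fix y ∈ 𝒴 and subsets b₁(y), …, b_m(y) of b(y). Let φ_y : ℝ_{>0}^{b(y)} → ℝ be the local potential of the composite likelihood, φ_y(g) = −Σ_{ℓ=1}^m log(1 + Σ_{z∈b_ℓ(y)} g_z). If the |b(y)| × m matrix whose columns are the indicator vectors 𝟏_{b₁(y)}, …, 𝟏_{b_m(y)} has rank |b(y)| (equivalently, the indicator vectors span ℝ^{b(y)}), then φ_y is strictly convex on ℝ_{>0}^{b(y)}. -/

import Mathlib

open scoped BigOperators

noncomputable def bregman {A : Type*} [Fintype A] [DecidableEq A]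
    (φ : (A → ℝ) → ℝ) (f g : A → ℝ) : ℝ :=
  φ f - φ g - ∑ a, fderiv ℝ φ g (Pi.single a 1) * (f a - g a)

def posOrth (A : Type*) : Set (A → ℝ) := {g | ∀ a, 0 < g a}

def probSet (Y : Type*) [Fintype Y] : Set (Y → ℝ) :=
  {p | (∀ y, 0 < p y) ∧ ∑ y, p y = 1}

noncomputable def DPhi {Y : Type*} [Fintype Y] [DecidableEq Y]
    (G : SimpleGraph Y) [DecidableRel G.Adj] (Y0 : Finset Y)
    (φ : ∀ y : Y, (↥(G.neighborSet y) → ℝ) → ℝ) (f g : Y → ℝ) : ℝ :=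
  ∑ y ∈ Y0, f y * bregman (φ y) (fun z => f z.1 / f y) (fun z => g z.1 / g y)

def nbd {Y : Type*} (G : SimpleGraph Y) (y : Y) : Set Y := insert y (G.neighborSet y)

/-- Graph `G₀` on a vertex subset: edges when closed neighborhoods intersect. -/
def overlapGraph {Y : Type*} (G : SimpleGraph Y) (Y0 : Set Y) : SimpleGraph Y0 where
  Adj a b := a ≠ b ∧ (nbd G a.1 ∩ nbd G b.1).Nonempty
  symm := by
    constructor
    intro a b h
    exact ⟨h.1.symm, by rw [Set.inter_comm]; exact h.2⟩
  loopless := by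
    constructor
    intro a h
    exact h.1 rfl

/-- Graph `G₀'` on a vertex subset: edges when open neighborhoods intersect. -/
def bOverlapGraph {Y : Type*} (G : SimpleGraph Y) (Y0 : Set Y) : SimpleGraph Y0 where
  Adj a b := a ≠ b ∧ (G.neighborSet a.1 ∩ G.neighborSet b.1).Nonempty
  symm := by
    constructor
    intro a b h
    exact ⟨h.1.symm, by rw [Set.inter_comm]; exact h.2⟩
  loopless := by
    constructor
    intro a h
    exact h.1 rfl

noncomputable def psPot (γ : ℝ) {A : Type*} [Fintype A] (f : A → ℝ) : ℝ :=
  (∑ a, f a ^ (1 + γ)) ^ (1 / (1 + γ))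

/-- The local potential of the composite likelihood,
`φ_y(g) = −Σ_ℓ log(1 + Σ_{z ∈ b_ℓ(y)} g_z)`, is strictly convex on `ℝ_{>0}^{b(y)}`
provided the indicator vectors of `b₁(y), …, b_m(y)` span `ℝ^{b(y)}`. -/
theorem stmt5 {Y : Type*} [Fintype Y] [DecidableEq Y]
    (G : SimpleGraph Y) [DecidableRel G.Adj] (y : Y)
    (m : ℕ) (c : Fin m → Finset Y)
    (hsub : ∀ ℓ, c ℓ ⊆ G.neighborFinset y)
    (hspan : Submodule.span ℝ
        (Set.range fun ℓ : Fin m =>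
          fun z : ↥(G.neighborSet y) => if z.1 ∈ c ℓ then (1 : ℝ) else 0) = ⊤) :
    StrictConvexOn ℝ (posOrth ↥(G.neighborSet y))
      (fun g : ↥(G.neighborSet y) → ℝ =>
        -∑ ℓ : Fin m,
          Real.log (1 + ∑ z : ↥(G.neighborSet y), if z.1 ∈ c ℓ then g z else 0)) := by
  classical
  set A := ↥(G.neighborSet y)
  set S : Fin m → (A → ℝ) → ℝ := fun ℓ g => ∑ z : A, if z.1 ∈ c ℓ then g z else 0 with hS
  have hSlin : ∀ ℓ (a b : ℝ) (u v : A → ℝ),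
      S ℓ (a • u + b • v) = a * S ℓ u + b * S ℓ v := by
    intro ℓ a b u v
    simp only [hS, Pi.add_apply, Pi.smul_apply, smul_eq_mul, Finset.mul_sum]
    rw [← Finset.sum_add_distrib]
    congr 1; ext z; split <;> simp [mul_add]
  have hSpos : ∀ ℓ (g : A → ℝ), g ∈ posOrth A → 0 < 1 + S ℓ g := by
    intro ℓ g hg
    have : 0 ≤ S ℓ g := Finset.sum_nonneg fun z _ => by
      split
      · exact (hg z).le
      · exact le_rfl
    linarith
  -- injectivity from spanning
  have hinj : ∀ u v : A → ℝ, (∀ ℓ, S ℓ u = S ℓ v) → u = v := by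
    intro u v h
    set w : A → ℝ := u - v with hw
    have hzero : ∀ ℓ, ∑ z : A, (if z.1 ∈ c ℓ then (1:ℝ) else 0) * w z = 0 := by
      intro ℓ
      have heq : ∑ z : A, (if z.1 ∈ c ℓ then (1:ℝ) else 0) * w z = S ℓ u - S ℓ v := by
        simp only [hS, hw, Pi.sub_apply, ← Finset.sum_sub_distrib]
        refine Finset.sum_congr rfl fun z _ => ?_
        split <;> ring
      rw [heq, h ℓ, sub_self]
    set B : (A → ℝ) →ₗ[ℝ] ℝ :=
      { toFun := fun f => ∑ z : A, f z * w z
        map_add' := by intro f g; simp [add_mul, Finset.sum_add_distrib]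
        map_smul' := by intro r f; simp [mul_assoc, Finset.mul_sum] }
    have hBtop : ∀ f : A → ℝ, B f = 0 := by
      intro f
      have hf : f ∈ Submodule.span ℝ (Set.range fun ℓ : Fin m =>
          fun z : A => if z.1 ∈ c ℓ then (1 : ℝ) else 0) := by
        rw [hspan]; trivial
      refine Submodule.span_induction ?_ ?_ ?_ ?_ hf
      · rintro x ⟨ℓ, rfl⟩; exact hzero ℓ
      · simp
      · intro x y _ _ hx hy; simp [map_add, hx, hy]
      · intro r x _ hx; simp [map_smul, hx]
    have hww : B w = 0 := hBtop w
    have : ∑ z : A, w z * w z = 0 := hww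
    have hwz : w = 0 := by
      funext z
      have h1 := (Finset.sum_eq_zero_iff_of_nonneg (fun z _ => mul_self_nonneg (w z))).mp this
      exact mul_self_eq_zero.mp (h1 z (Finset.mem_univ z))
    have huv : u - v = 0 := by rw [← hw]; exact hwz
    exact sub_eq_zero.mp huv
  constructor
  · -- convexity of the positive orthant
    intro u hu v hv a b ha hb hab z
    have hm : 0 < min (u z) (v z) := lt_min (hu z) (hv z)
    have h1 : a * min (u z) (v z) ≤ a * u z :=
      mul_le_mul_of_nonneg_left (min_le_left _ _) ha
    have h2 : b * min (u z) (v z) ≤ b * v z :=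
      mul_le_mul_of_nonneg_left (min_le_right _ _) hb
    have : (0:ℝ) < a * u z + b * v z := by nlinarith
    simpa using this
  · intro u hu v hv huv a b ha hb hab
    obtain ⟨ℓ₀, hℓ₀⟩ : ∃ ℓ, S ℓ u ≠ S ℓ v := by
      by_contra hcon
      push_neg at hcon
      exact huv (hinj u v hcon)
    have key : ∀ ℓ : Fin m,
        a * Real.log (1 + S ℓ u) + b * Real.log (1 + S ℓ v)
          ≤ Real.log (1 + S ℓ (a • u + b • v)) := by
      intro ℓ
      have hmid : 1 + S ℓ (a • u + b • v) = a * (1 + S ℓ u) + b * (1 + S ℓ v) := by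
        rw [hSlin]; ring_nf; linarith [hab]
      rw [hmid]
      exact (strictConcaveOn_log_Ioi.concaveOn).2
        (Set.mem_Ioi.mpr (hSpos ℓ u hu)) (Set.mem_Ioi.mpr (hSpos ℓ v hv))
        ha.le hb.le hab
    have key₀ :
        a * Real.log (1 + S ℓ₀ u) + b * Real.log (1 + S ℓ₀ v)
          < Real.log (1 + S ℓ₀ (a • u + b • v)) := by
      have hmid : 1 + S ℓ₀ (a • u + b • v) = a * (1 + S ℓ₀ u) + b * (1 + S ℓ₀ v) := by
        rw [hSlin]; ring_nf; linarith [hab]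
      rw [hmid]
      exact strictConcaveOn_log_Ioi.2
        (Set.mem_Ioi.mpr (hSpos ℓ₀ u hu)) (Set.mem_Ioi.mpr (hSpos ℓ₀ v hv))
        (by intro h; exact hℓ₀ (by linarith)) ha hb hab
    have hsum :
        ∑ ℓ : Fin m, (a * Real.log (1 + S ℓ u) + b * Real.log (1 + S ℓ v))
          < ∑ ℓ : Fin m, Real.log (1 + S ℓ (a • u + b • v)) :=
      Finset.sum_lt_sum (fun ℓ _ => key ℓ) ⟨ℓ₀, Finset.mem_univ _, key₀⟩
    rw [Finset.sum_add_distrib, ← Finset.mul_sum, ← Finset.mul_sum] at hsum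
    show -∑ ℓ : Fin m, Real.log (1 + S ℓ (a • u + b • v))
        < a • (-∑ ℓ : Fin m, Real.log (1 + S ℓ u))
          + b • (-∑ ℓ : Fin m, Real.log (1 + S ℓ v))
    simp only [smul_eq_mul]
    linarith
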